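/- Let R be a commutative ring and u, v ∈ R. Define polynomials P_ℓ ∈ R[X] by P_0 = 1, P_1 = X, P_2 = X² − (u + v), and P_{ℓ+1} = X·P_ℓ − v·P_{ℓ−1} for ℓ ≥ 2. Then for every integer ℓ ≥ 1, P_ℓ = X^ℓ − ∑_{r=1}^{⌊ℓ/2⌋} (α_{r,ℓ}·u + β_{r,ℓ}·v)·v^{r−1}·X^{ℓ−2r}, where the integers α_{r,ℓ}, β_{r,ℓ} are mapped into R by the canonical ring homomorphism ℤ → R. (This is the algebraic content of the closed-form expression of the half-integral weight Hecke operator T_{p^{2ℓ}} as a polynomial in T_{p²}, with u = χ(p²)p^{k−3} and v = χ(p²)p^{k−2}.) -/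

import Mathlib

open Polynomial

/-- Binomial coefficient C(n, j) for integers, taken to be 0 when j < 0 or j > n. -/
def Cb (n j : ℤ) : ℤ := if 0 ≤ j ∧ j ≤ n then (n.toNat).choose j.toNat else 0

/-- The sequence A_{r,ℓ}(m): A_{1,ℓ}(m) = 1 and, for r ≥ 2,
    A_{r,ℓ}(m) = A_{r−1,ℓ}(m) − C(ℓ−2(r−1), m−(r−1))·A_{r−1,ℓ}(r−1). -/
def Aseq (ℓ : ℕ) : ℕ → ℤ → ℤ
  | 0, _ => 1
  | 1, _ => 1
  | (r + 2), m =>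
      Aseq ℓ (r + 1) m
        - Cb ((ℓ : ℤ) - 2 * (r + 1)) (m - (r + 1)) * Aseq ℓ (r + 1) ((r : ℤ) + 1)

/-- The sequence B_{r,ℓ}(m): B_{1,ℓ}(m) = C(ℓ,m) − 1 and, for r ≥ 2,
    B_{r,ℓ}(m) = B_{r−1,ℓ}(m) − C(ℓ−2(r−1), m−(r−1))·B_{r−1,ℓ}(r−1). -/
def Bseq (ℓ : ℕ) : ℕ → ℤ → ℤ
  | 0, m => Cb (ℓ : ℤ) m - 1
  | 1, m => Cb (ℓ : ℤ) m - 1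
  | (r + 2), m =>
      Bseq ℓ (r + 1) m
        - Cb ((ℓ : ℤ) - 2 * (r + 1)) (m - (r + 1)) * Bseq ℓ (r + 1) ((r : ℤ) + 1)

/-- α_{r,ℓ} = A_{r,ℓ}(r). -/
def alphaSeq (ℓ r : ℕ) : ℤ := Aseq ℓ r r

/-- β_{r,ℓ} = B_{r,ℓ}(r). -/
def betaSeq (ℓ r : ℕ) : ℤ := Bseq ℓ r r

/-- The polynomials P_ℓ : P_0 = 1, P_1 = X, P_2 = X² − (u+v),
    P_{ℓ+1} = X·P_ℓ − v·P_{ℓ−1} for ℓ ≥ 2. -/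
noncomputable def Ppoly {R : Type*} [CommRing R] (u v : R) : ℕ → Polynomial R
  | 0 => 1
  | 1 => X
  | 2 => X ^ 2 - C (u + v)
  | (ℓ + 3) => X * Ppoly u v (ℓ + 2) - C v * Ppoly u v (ℓ + 1)


noncomputable def Qpoly {R : Type*} [CommRing R] (v : R) : ℕ → Polynomial R
  | 0 => 1
  | 1 => X
  | (n + 2) => X * Qpoly v (n + 1) - C v * Qpoly v n

/-- Signed Fibonacci-type coefficient. -/
def qc (n t : ℕ) : ℤ := (-1) ^ t * ((n - t).choose t : ℤ)

lemma qc_zero {n t : ℕ} (h : n < 2 * t) : qc n t = 0 := by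
  unfold qc
  rw [Nat.choose_eq_zero_of_lt (by omega)]
  simp

lemma qc_zero' (n : ℕ) : qc n 0 = 1 := by simp [qc]

lemma qc_rec (n t : ℕ) (h : t ≤ n) :
    qc (n + 2) (t + 1) = qc (n + 1) (t + 1) - qc n t := by
  unfold qc
  have h1 : n + 2 - (t + 1) = (n - t) + 1 := by omega
  have h2 : n + 1 - (t + 1) = n - t := by omega
  rw [h1, h2, Nat.choose_succ_succ]
  push_cast
  ring

lemma sum_Icc_one {M : Type*} [AddCommMonoid M] (m : ℕ) (f : ℕ → M) :
    ∑ s ∈ Finset.Icc 1 m, f s = ∑ t ∈ Finset.range m, f (t + 1) := by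
  induction m with
  | zero => simp
  | succ m ih =>
    rw [Finset.sum_Icc_succ_top (by omega), ih, Finset.sum_range_succ]
lemma Srec {R : Type*} [CommRing R] (v : R) (n : ℕ) :
    X * (∑ t ∈ Finset.range (n + 2), C ((qc (n + 1) t : R) * v ^ t) * X ^ (n + 1 - 2 * t))
      - C v * (∑ t ∈ Finset.range (n + 1), C ((qc n t : R) * v ^ t) * X ^ (n - 2 * t))
    = ∑ t ∈ Finset.range (n + 3), C ((qc (n + 2) t : R) * v ^ t) * X ^ (n + 2 - 2 * t) := by
  rw [Finset.mul_sum, Finset.mul_sum]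
  have fix : ∀ t ∈ Finset.range (n + 2),
      X * (C ((qc (n + 1) t : R) * v ^ t) * X ^ (n + 1 - 2 * t))
        = C ((qc (n + 1) t : R) * v ^ t) * X ^ (n + 2 - 2 * t) := by
    intro t ht
    by_cases h : 2 * t ≤ n + 1
    · have : n + 2 - 2 * t = (n + 1 - 2 * t) + 1 := by omega
      rw [this, pow_succ]
      ring
    · rw [qc_zero (by omega)]
      simp
  rw [Finset.sum_congr rfl fix]
  rw [Finset.sum_range_succ' (fun t => C ((qc (n + 2) t : R) * v ^ t) * X ^ (n + 2 - 2 * t)) (n + 2)]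
  rw [Finset.sum_range_succ' (fun t => C ((qc (n + 1) t : R) * v ^ t) * X ^ (n + 2 - 2 * t)) (n + 1)]
  rw [Finset.sum_range_succ (fun t => C ((qc (n + 2) (t + 1) : R) * v ^ (t + 1)) * X ^ (n + 2 - 2 * (t + 1))) (n + 1)]
  rw [qc_zero (n := n + 2) (t := n + 2) (by omega)]
  have key : ∑ t ∈ Finset.range (n + 1),
        C ((qc (n + 1) (t + 1) : R) * v ^ (t + 1)) * X ^ (n + 2 - 2 * (t + 1))
      - ∑ t ∈ Finset.range (n + 1), C v * (C ((qc n t : R) * v ^ t) * X ^ (n - 2 * t))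
      = ∑ t ∈ Finset.range (n + 1),
        C ((qc (n + 2) (t + 1) : R) * v ^ (t + 1)) * X ^ (n + 2 - 2 * (t + 1)) := by
    rw [← Finset.sum_sub_distrib]
    refine Finset.sum_congr rfl ?_
    intro t ht
    have ht' : t ≤ n := by simpa [Nat.lt_succ_iff] using ht
    have he : n + 2 - 2 * (t + 1) = n - 2 * t := by omega
    rw [he, qc_rec n t ht']
    push_cast
    simp only [map_sub, map_mul, map_pow]
    ring
  rw [← key]
  simp [qc_zero']
  ring

lemma Qpoly_closed {R : Type*} [CommRing R] (v : R) (n : ℕ) :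
    Qpoly v n = ∑ t ∈ Finset.range (n + 1),
      C ((qc n t : R) * v ^ t) * X ^ (n - 2 * t) := by
  induction n using Nat.strong_induction_on with
  | _ n ih =>
    match n with
    | 0 => simp [Qpoly, qc]
    | 1 => simp [Qpoly, qc, Finset.sum_range_succ]
    | (n + 2) =>
      rw [show Qpoly v (n + 2) = X * Qpoly v (n + 1) - C v * Qpoly v n from rfl,
        ih (n + 1) (by omega), ih n (by omega), Srec]

lemma Qpoly_eval_geom (n : ℕ) :
    eval (1 + X) (Qpoly (X : Polynomial ℤ) n) = ∑ i ∈ Finset.range (n + 1), X ^ i := by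
  induction n using Nat.strong_induction_on with
  | _ n ih =>
    match n with
    | 0 => simp [Qpoly]
    | 1 => simp [Qpoly, Finset.sum_range_succ]
    | (n + 2) =>
      rw [show Qpoly (X : Polynomial ℤ) (n + 2)
            = X * Qpoly X (n + 1) - C X * Qpoly X n from rfl]
      rw [eval_sub, eval_mul, eval_mul, eval_X, eval_C, ih (n + 1) (by omega), ih n (by omega)]
      rw [Finset.sum_range_succ _ (n + 2), Finset.sum_range_succ _ (n + 1)]
      ring

lemma star (n k : ℕ) (hk : k ≤ n) :
    ∑ t ∈ Finset.range (k + 1), qc n t * ((n - 2 * t).choose (k - t) : ℤ) = 1 := by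
  have h := Qpoly_eval_geom n
  rw [Qpoly_closed] at h
  have h2 := congrArg (fun p => Polynomial.coeff p k) h
  simp only [eval_finset_sum, eval_mul, eval_pow, eval_C, eval_X,
    Polynomial.finset_sum_coeff] at h2
  have hL : ∀ t ∈ Finset.range (n + 1),
      Polynomial.coeff (((qc n t : Polynomial ℤ) * X ^ t) * (1 + X) ^ (n - 2 * t)) k
        = if t ≤ k then qc n t * ((n - 2 * t).choose (k - t) : ℤ) else 0 := by
    intro t ht
    rw [show ((qc n t : Polynomial ℤ) * X ^ t) * (1 + X) ^ (n - 2 * t)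
        = C (qc n t) * ((1 + X) ^ (n - 2 * t) * X ^ t) by rw [← C_eq_intCast (qc n t)]; simp only [Int.cast_id]; ring]
    rw [Polynomial.coeff_C_mul, Polynomial.coeff_mul_X_pow']
    by_cases htk : t ≤ k
    · rw [if_pos htk, if_pos htk, show (1 + X : Polynomial ℤ) = X + 1 by ring,
        Polynomial.coeff_X_add_one_pow]
    · rw [if_neg htk, if_neg htk, mul_zero]
  rw [Finset.sum_congr rfl hL] at h2
  have hR : ∀ i ∈ Finset.range (n + 1),
      Polynomial.coeff ((X : Polynomial ℤ) ^ i) k = if i = k then 1 else 0 := by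
    intro i _
    rw [Polynomial.coeff_X_pow]
    simp [eq_comm]
  rw [Finset.sum_congr rfl hR, Finset.sum_ite_eq' (Finset.range (n + 1)) k (fun _ => (1 : ℤ)),
    if_pos (Finset.mem_range.mpr (by omega))] at h2
  calc ∑ t ∈ Finset.range (k + 1), qc n t * ((n - 2 * t).choose (k - t) : ℤ)
      = ∑ t ∈ Finset.range (k + 1),
          (if t ≤ k then qc n t * ((n - 2 * t).choose (k - t) : ℤ) else 0) :=
        Finset.sum_congr rfl (fun t ht =>
          (if_pos (by simpa [Nat.lt_succ_iff] using ht)).symm)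
    _ = ∑ t ∈ Finset.range (n + 1),
          (if t ≤ k then qc n t * ((n - 2 * t).choose (k - t) : ℤ) else 0) :=
        Finset.sum_subset (Finset.range_subset_range.mpr (by omega))
          (fun x hx hnx => if_neg (by simp only [Finset.mem_range] at hx hnx; omega))
    _ = 1 := h2

lemma Cb_natCast (n j : ℕ) : Cb (n : ℤ) (j : ℤ) = (n.choose j : ℤ) := by
  unfold Cb
  by_cases h : j ≤ n
  · rw [if_pos ⟨Int.natCast_nonneg j, by exact_mod_cast h⟩]
    simp
  · rw [if_neg (by push_cast; omega), Nat.choose_eq_zero_of_lt (by omega)]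
    simp

lemma Aseq_sum (ℓ : ℕ) (r : ℕ) (m : ℤ) :
    Aseq ℓ (r + 1) m
      = 1 - ∑ s ∈ Finset.Icc 1 r, Cb ((ℓ : ℤ) - 2 * s) (m - s) * alphaSeq ℓ s := by
  induction r with
  | zero => simp [Aseq]
  | succ r ih =>
    show Aseq ℓ (r + 2) m = _
    rw [Aseq, ih, Finset.sum_Icc_succ_top (by omega : 1 ≤ r + 1)]
    have ha : Aseq ℓ (r + 1) ((r : ℤ) + 1) = alphaSeq ℓ (r + 1) := by
      unfold alphaSeq
      norm_cast
    rw [ha]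
    push_cast
    ring

lemma Bseq_sum (ℓ : ℕ) (r : ℕ) (m : ℤ) :
    Bseq ℓ (r + 1) m
      = Cb (ℓ : ℤ) m - 1
        - ∑ s ∈ Finset.Icc 1 r, Cb ((ℓ : ℤ) - 2 * s) (m - s) * betaSeq ℓ s := by
  induction r with
  | zero => simp [Bseq]
  | succ r ih =>
    show Bseq ℓ (r + 2) m = _
    rw [Bseq, ih, Finset.sum_Icc_succ_top (by omega : 1 ≤ r + 1)]
    have hb : Bseq ℓ (r + 1) ((r : ℤ) + 1) = betaSeq ℓ (r + 1) := by
      unfold betaSeq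
      norm_cast
    rw [hb]
    push_cast
    ring

lemma alphaSeq_closed (ℓ : ℕ) : ∀ r : ℕ, 1 ≤ r → 2 * r ≤ ℓ →
    alphaSeq ℓ r = qc (ℓ - 2) (r - 1) := by
  intro r
  induction r using Nat.strong_induction_on with
  | _ r ih =>
    intro h1 h2
    obtain ⟨r', rfl⟩ : ∃ r', r = r' + 1 := ⟨r - 1, by omega⟩
    have hs := star (ℓ - 2) r' (by omega)
    rw [Finset.sum_range_succ, Nat.sub_self, Nat.choose_zero_right, Nat.cast_one, mul_one] at hs
    have key : alphaSeq ℓ (r' + 1)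
        = 1 - ∑ t ∈ Finset.range r',
            qc (ℓ - 2) t * ((ℓ - 2 - 2 * t).choose (r' - t) : ℤ) := by
      unfold alphaSeq
      rw [Aseq_sum, sum_Icc_one]
      congr 1
      refine Finset.sum_congr rfl ?_
      intro t ht
      have ht' : t < r' := Finset.mem_range.mp ht
      rw [ih (t + 1) (by omega) (by omega) (by omega)]
      rw [show (ℓ : ℤ) - 2 * ((t + 1 : ℕ) : ℤ) = ((ℓ - 2 * (t + 1) : ℕ) : ℤ) by push_cast; omega]
      rw [show ((r' + 1 : ℕ) : ℤ) - ((t + 1 : ℕ) : ℤ) = ((r' - t : ℕ) : ℤ) by push_cast; omega]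
      rw [Cb_natCast, show ℓ - 2 * (t + 1) = ℓ - 2 - 2 * t by omega,
        show t + 1 - 1 = t by omega]
      ring
    rw [key, show r' + 1 - 1 = r' by omega]
    linarith [hs]

lemma betaSeq_closed (ℓ : ℕ) : ∀ r : ℕ, 1 ≤ r → 2 * r ≤ ℓ →
    betaSeq ℓ r = - qc ℓ r := by
  intro r
  induction r using Nat.strong_induction_on with
  | _ r ih =>
    intro h1 h2
    obtain ⟨r', rfl⟩ : ∃ r', r = r' + 1 := ⟨r - 1, by omega⟩
    have hs := star ℓ (r' + 1) (by omega)
    rw [Finset.sum_range_succ, Nat.sub_self, Nat.choose_zero_right, Nat.cast_one, mul_one] at hs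
    rw [Finset.sum_range_succ'] at hs
    have h0 : qc ℓ 0 * ((ℓ - 2 * 0).choose (r' + 1 - 0) : ℤ) = (ℓ.choose (r' + 1) : ℤ) := by
      simp [qc_zero']
    rw [h0] at hs
    have key : betaSeq ℓ (r' + 1)
        = (ℓ.choose (r' + 1) : ℤ) - 1
          + ∑ t ∈ Finset.range r',
              qc ℓ (t + 1) * ((ℓ - 2 * (t + 1)).choose (r' + 1 - (t + 1)) : ℤ) := by
      unfold betaSeq
      rw [Bseq_sum, sum_Icc_one]
      rw [show Cb (ℓ : ℤ) ((r' + 1 : ℕ) : ℤ) = (ℓ.choose (r' + 1) : ℤ) from Cb_natCast ℓ (r' + 1)]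
      rw [sub_eq_add_neg, ← Finset.sum_neg_distrib]
      congr 1
      refine Finset.sum_congr rfl ?_
      intro t ht
      have ht' : t < r' := Finset.mem_range.mp ht
      rw [ih (t + 1) (by omega) (by omega) (by omega)]
      rw [show (ℓ : ℤ) - 2 * ((t + 1 : ℕ) : ℤ) = ((ℓ - 2 * (t + 1) : ℕ) : ℤ) by push_cast; omega]
      rw [show ((r' + 1 : ℕ) : ℤ) - ((t + 1 : ℕ) : ℤ) = ((r' + 1 - (t + 1) : ℕ) : ℤ) by push_cast; omega]
      rw [Cb_natCast]
      ring
    rw [key]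
    linarith [hs]

lemma Ppoly_eq_Q {R : Type*} [CommRing R] (u v : R) : ∀ n : ℕ,
    Ppoly u v (n + 2) = Qpoly v (n + 2) - C u * Qpoly v n ∧
    Ppoly u v (n + 3) = Qpoly v (n + 3) - C u * Qpoly v (n + 1) := by
  have q0 : Qpoly v 0 = 1 := rfl
  have q1 : Qpoly v 1 = X := rfl
  have q2 : ∀ m : ℕ, Qpoly v (m + 2) = X * Qpoly v (m + 1) - C v * Qpoly v m := fun _ => rfl
  intro n
  induction n with
  | zero =>
    refine ⟨?_, ?_⟩
    · show Ppoly u v 2 = Qpoly v 2 - C u * Qpoly v 0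
      rw [show Ppoly u v 2 = X ^ 2 - C (u + v) from rfl, q2 0, q0, q1, C_add]
      ring
    · show Ppoly u v 3 = Qpoly v 3 - C u * Qpoly v 1
      rw [show Ppoly u v 3 = X * Ppoly u v 2 - C v * Ppoly u v 1 from rfl,
        show Ppoly u v 2 = X ^ 2 - C (u + v) from rfl,
        show Ppoly u v 1 = X from rfl, q2 1, q2 0, q0, q1, C_add]
      ring
  | succ n ih =>
    refine ⟨ih.2, ?_⟩
    rw [show Ppoly u v (n + 1 + 3) = X * Ppoly u v (n + 3) - C v * Ppoly u v (n + 2) from rfl,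
      ih.1, ih.2, show n + 1 + 3 = n + 2 + 2 by ring, q2 (n + 2), q2 n]
    ring

lemma Qpoly_Icc {R : Type*} [CommRing R] (v : R) (ℓ : ℕ) (h2 : 2 ≤ ℓ) :
    Qpoly v ℓ = X ^ ℓ
      + ∑ r ∈ Finset.Icc 1 (ℓ / 2), C ((qc ℓ r : R) * v ^ r) * X ^ (ℓ - 2 * r) := by
  rw [Qpoly_closed, Finset.sum_range_succ' _ ℓ]
  have h0 : C ((qc ℓ 0 : R) * v ^ 0) * X ^ (ℓ - 2 * 0) = X ^ ℓ := by
    simp [qc_zero']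
  rw [h0, ← sum_Icc_one ℓ (fun t => C ((qc ℓ t : R) * v ^ t) * X ^ (ℓ - 2 * t))]
  rw [← Finset.sum_subset (Finset.Icc_subset_Icc_right (by omega : ℓ / 2 ≤ ℓ))
    (fun x hx hnx => by
      rw [qc_zero (by simp only [Finset.mem_Icc] at hx hnx; omega)]
      simp)]
  ring

lemma Qpoly_Icc' {R : Type*} [CommRing R] (u v : R) (ℓ : ℕ) (h2 : 2 ≤ ℓ) :
    C u * Qpoly v (ℓ - 2)
      = ∑ r ∈ Finset.Icc 1 (ℓ / 2),
          C ((qc (ℓ - 2) (r - 1) : R) * u * v ^ (r - 1)) * X ^ (ℓ - 2 * r) := by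
  rw [Qpoly_closed, Finset.mul_sum]
  rw [Finset.sum_subset (Finset.Icc_subset_Icc_right (by omega : ℓ / 2 ≤ ℓ - 2 + 1))
    (fun x hx hnx => by
      rw [qc_zero (by simp only [Finset.mem_Icc] at hx hnx; omega)]
      simp)]
  rw [sum_Icc_one (ℓ - 2 + 1)
    (fun r => C ((qc (ℓ - 2) (r - 1) : R) * u * v ^ (r - 1)) * X ^ (ℓ - 2 * r))]
  refine Finset.sum_congr rfl ?_
  intro t _
  simp only [Nat.add_sub_cancel]
  rw [show ℓ - 2 - 2 * t = ℓ - 2 * (t + 1) by omega]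
  simp only [C_mul]
  ring

theorem Ppoly_closed_form_aux {R : Type*} [CommRing R] (u v : R) (ℓ : ℕ) (hℓ : 1 ≤ ℓ) :
    Ppoly u v ℓ
      = X ^ ℓ
        - ∑ r ∈ Finset.Icc 1 (ℓ / 2),
            C ((alphaSeq ℓ r : R) * u + (betaSeq ℓ r : R) * v) * C v ^ (r - 1)
              * X ^ (ℓ - 2 * r) := by
  obtain rfl | hℓ2 : ℓ = 1 ∨ 2 ≤ ℓ := by omega
  · rw [show Ppoly u v 1 = X from rfl, show (1 : ℕ) / 2 = 0 from rfl,
      Finset.Icc_eq_empty (by omega), Finset.sum_empty, sub_zero, pow_one]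
  · obtain ⟨n, rfl⟩ : ∃ n, ℓ = n + 2 := ⟨ℓ - 2, by omega⟩
    rw [show Ppoly u v (n + 2) = Qpoly v (n + 2) - C u * Qpoly v n
        from (Ppoly_eq_Q u v n).1,
      show (Qpoly v n : Polynomial R) = Qpoly v (n + 2 - 2) from by norm_num,
      Qpoly_Icc v (n + 2) (by omega), Qpoly_Icc' u v (n + 2) (by omega)]
    have hterm : ∀ r ∈ Finset.Icc 1 ((n + 2) / 2),
        C ((alphaSeq (n + 2) r : R) * u + (betaSeq (n + 2) r : R) * v) * C v ^ (r - 1)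
            * X ^ (n + 2 - 2 * r)
          = C ((qc (n + 2 - 2) (r - 1) : R) * u * v ^ (r - 1)) * X ^ (n + 2 - 2 * r)
            - C ((qc (n + 2) r : R) * v ^ r) * X ^ (n + 2 - 2 * r) := by
      intro r hr
      simp only [Finset.mem_Icc] at hr
      have h1 : 1 ≤ r := hr.1
      have h2' : 2 * r ≤ n + 2 := by omega
      rw [alphaSeq_closed (n + 2) r h1 h2', betaSeq_closed (n + 2) r h1 h2']
      have hv : (C v : Polynomial R) ^ r = C v ^ (r - 1) * C v := by
        rw [← pow_succ]
        congr 1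
        omega
      push_cast
      simp only [map_add, map_mul, map_pow, map_neg, Nat.add_sub_cancel]
      rw [hv]
      ring
    rw [Finset.sum_congr rfl hterm, Finset.sum_sub_distrib]
    ring

/-- for every ℓ ≥ 1,
    P_ℓ = X^ℓ − ∑_{r=1}^{⌊ℓ/2⌋} (α_{r,ℓ}·u + β_{r,ℓ}·v)·v^{r−1}·X^{ℓ−2r}. -/
theorem Ppoly_closed_form {R : Type*} [CommRing R] (u v : R) (ℓ : ℕ) (hℓ : 1 ≤ ℓ) :
    Ppoly u v ℓ
      = X ^ ℓ
        - ∑ r ∈ Finset.Icc 1 (ℓ / 2),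
            C ((alphaSeq ℓ r : R) * u + (betaSeq ℓ r : R) * v) * C v ^ (r - 1)
              * X ^ (ℓ - 2 * r) := by
  exact Ppoly_closed_form_aux u v ℓ hℓ
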